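/- Under any maximum-weight b-matching mechanism induced by the augmenting-path algorithm (with BFS or DFS), an agent who is assigned no task under truthful reporting cannot obtain positive utility by hiding any subset of its edges: if agent a_k is unmatched in the output on edge set E, then for every E' obtained from E by deleting a subset of a_k's edges, the mechanism's output on E' also leaves a_k unmatched. -/

import Mathlib

open Classical

/-- An edge of the bipartite graph: a pair (agent, task). -/
abbrev Edge (n m : ℕ) := Fin n × Fin m

variable {n m : ℕ}

/-- Number of tasks assigned to agent `i` in the edge set `μ`. -/
def deg (μ : Finset (Edge n m)) (i : Fin n) : ℕ := (μ.filter (fun e => e.1 = i)).card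

/-- `μ` is a b-matching over the edge set `E'`: it uses only edges of `E'`, each agent `i`
receives at most `b i` tasks, and each task is matched to at most one agent. -/
def IsBMatching (b : Fin n → ℕ) (E' μ : Finset (Edge n m)) : Prop :=
  μ ⊆ E' ∧ (∀ i, deg μ i ≤ b i) ∧ ∀ j : Fin m, (μ.filter (fun e => e.2 = j)).card ≤ 1

/-- Weight of a matching: total value of matched tasks. -/
noncomputable def weight (q : Fin m → ℝ) (μ : Finset (Edge n m)) : ℝ := ∑ e ∈ μ, q e.2

/-- Utility of agent `i`: total value of the tasks matched to `i`. -/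
noncomputable def util (q : Fin m → ℝ) (i : Fin n) (μ : Finset (Edge n m)) : ℝ :=
  ∑ e ∈ μ.filter (fun e => e.1 = i), q e.2

/-- `μ` is a maximum vertex-weighted b-matching over the edge set `E'`. -/
def IsMaxMatching (b : Fin n → ℕ) (q : Fin m → ℝ) (E' μ : Finset (Edge n m)) : Prop :=
  IsBMatching b E' μ ∧ ∀ ν, IsBMatching b E' ν → weight q ν ≤ weight q μ

/-- The edges of `E` incident to agent `i`. -/
def agentEdges (E : Finset (Edge n m)) (i : Fin n) : Finset (Edge n m) :=
  E.filter (fun e => e.1 = i)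

/-- The edge set obtained from `E` when agent `i` reports `S` instead of its true edges. -/
def deviate (E : Finset (Edge n m)) (i : Fin n) (S : Finset (Edge n m)) : Finset (Edge n m) :=
  E.filter (fun e => e.1 ≠ i) ∪ S

/-- A valid report of agent `i`: a nonempty subset of its true incident edges. -/
def ValidReport (E : Finset (Edge n m)) (i : Fin n) (S : Finset (Edge n m)) : Prop :=
  S ⊆ agentEdges E i ∧ S.Nonempty
open Classical in
/-- The tasks sorted in non-increasing order of value (ties broken by index). -/
noncomputable def sortedTasks (m : ℕ) (q : Fin m → ℝ) : List (Fin m) :=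
  List.insertionSort (fun j k => q k ≤ q j) (List.finRange m)

/-- The greedy mechanism `M_AP`: process tasks in non-increasing value order, assigning each
task to the highest-priority unsaturated agent connected to it, if any. -/
noncomputable def MAP (b : Fin n → ℕ) (q : Fin m → ℝ) (E' : Finset (Edge n m)) :
    Finset (Edge n m) :=
  (sortedTasks m q).foldl (fun μ j =>
    match (List.finRange n).find? (fun i => decide ((i, j) ∈ E' ∧ deg μ i < b i)) with
    | some i => insert (i, j) μ
    | none => μ) ∅

/-- `p = [(i₁,j₁),…,(i_L,j_L)]` is an augmenting path from task `j = j₁` with respect to the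
matching `μ` in the graph `E'`: the edges `(i_ℓ, j_ℓ)` are non-matching edges of `E'`, the
edges `(i_ℓ, j_{ℓ+1})` are matching edges, all interior agents are saturated and the final
agent is unsaturated. -/
structure IsAugPathFrom (b : Fin n → ℕ) (E' μ : Finset (Edge n m)) (j : Fin m)
    (p : List (Edge n m)) : Prop where
  ne : p ≠ []
  starts : ∀ e ∈ p.head?, e.2 = j
  mem : ∀ e ∈ p, e ∈ E' ∧ e ∉ μ
  matched : ∀ k, (h : k + 1 < p.length) →
    ((p.get ⟨k, Nat.lt_of_succ_lt h⟩).1, (p.get ⟨k + 1, h⟩).2) ∈ μ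
  satInterior : ∀ k, (h : k + 1 < p.length) →
    b (p.get ⟨k, Nat.lt_of_succ_lt h⟩).1 ≤ deg μ (p.get ⟨k, Nat.lt_of_succ_lt h⟩).1
  unsatLast : ∀ e ∈ p.getLast?, deg μ e.1 < b e.1
  agentsNodup : (p.map Prod.fst).Nodup
  tasksNodup : (p.map Prod.snd).Nodup

/-- The matching edges of an augmenting path. -/
def pathMatched (p : List (Edge n m)) : List (Edge n m) :=
  (p.zip p.tail).map (fun ef => (ef.1.1, ef.2.2))

/-- Flip an augmenting path: remove its matching edges and add its non-matching edges. -/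
def applyPath (μ : Finset (Edge n m)) (p : List (Edge n m)) : Finset (Edge n m) :=
  (μ \ (pathMatched p).toFinset) ∪ p.toFinset

/-- A numeric key realizing the lexicographic order (by vertex indices) on augmenting paths. -/
def pathKey (n m : ℕ) (p : List (Edge n m)) : ℕ :=
  ((p.flatMap fun (e : Edge n m) => [e.1.val + 1, e.2.val + 1]) ++
    List.replicate (2 * n - 2 * p.length) 0).foldl (fun a d => a * (n + m + 2) + d) 0

/-- DFS explores agents in priority order and goes deep first: it returns the lexicographically
least augmenting path. -/
def dfsCost (n m : ℕ) (p : List (Edge n m)) : ℕ := pathKey n m p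

/-- BFS returns a shortest augmenting path, exploring vertices in priority order: it returns
the lexicographically least augmenting path among those of minimum length. -/
def bfsCost (n m : ℕ) (p : List (Edge n m)) : ℕ :=
  p.length * (n + m + 2) ^ (2 * n + 2) + pathKey n m p

/-- Select the cost-minimal augmenting path from task `j`, if an augmenting path exists. -/
noncomputable def selectPath (cost : List (Edge n m) → ℕ) (b : Fin n → ℕ)
    (E' μ : Finset (Edge n m)) (j : Fin m) : Option (List (Edge n m)) :=
  if h : ∃ p, IsAugPathFrom b E' μ j p ∧ ∀ p', IsAugPathFrom b E' μ j p' → cost p ≤ cost p'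
  then some h.choose else none

/-- The augmenting-path algorithm: process tasks in non-increasing value order, at each step
flipping the augmenting path found by the (deterministic) search given by `cost`. -/
noncomputable def runAug (cost : List (Edge n m) → ℕ) (b : Fin n → ℕ) (q : Fin m → ℝ)
    (E' : Finset (Edge n m)) : Finset (Edge n m) :=
  (sortedTasks m q).foldl (fun μ j =>
    match selectPath cost b E' μ j with
    | some p => applyPath μ p
    | none => μ) ∅

/-- The maximum vertex-weighted b-matching mechanism using breadth-first search. -/
noncomputable def MBFS (b : Fin n → ℕ) (q : Fin m → ℝ) (E' : Finset (Edge n m)) :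
    Finset (Edge n m) := runAug (bfsCost n m) b q E'

/-- The maximum vertex-weighted b-matching mechanism using depth-first search. -/
noncomputable def MDFS (b : Fin n → ℕ) (q : Fin m → ℝ) (E' : Finset (Edge n m)) :
    Finset (Edge n m) := runAug (dfsCost n m) b q E'

/-! ### Auxiliary lemmas -/

section Aux

lemma foldl_digits_shift (B : ℕ) (l : List ℕ) (a : ℕ) :
    l.foldl (fun a d => a * B + d) a
      = a * B ^ l.length + l.foldl (fun a d => a * B + d) 0 := by
  induction l generalizing a with
  | nil => simp
  | cons d t ih =>
    simp only [List.foldl_cons, List.length_cons]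
    rw [ih (a * B + d), ih (0 * B + d)]
    ring

lemma foldl_digits_lt {B : ℕ} (hB : 0 < B) (l : List ℕ) (h : ∀ d ∈ l, d < B) :
    l.foldl (fun a d => a * B + d) 0 < B ^ l.length := by
  induction l with
  | nil => simpa using hB
  | cons d t ih =>
    simp only [List.foldl_cons, List.length_cons]
    rw [foldl_digits_shift B t (0 * B + d)]
    have hd : d < B := h d List.mem_cons_self
    have hv : t.foldl (fun a d => a * B + d) 0 < B ^ t.length :=
      ih (fun x hx => h x (List.mem_cons_of_mem _ hx))
    have h1 : (0 * B + d) * B ^ t.length + t.foldl (fun a d => a * B + d) 0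
        < (d + 1) * B ^ t.length := by
      simp only [zero_mul, zero_add, add_mul, one_mul]
      omega
    have h2 : (d + 1) * B ^ t.length ≤ B * B ^ t.length :=
      Nat.mul_le_mul_right _ hd
    calc _ < (d + 1) * B ^ t.length := h1
      _ ≤ B * B ^ t.length := h2
      _ = B ^ (t.length + 1) := by rw [pow_succ]; ring

lemma mul_add_cancel'' {X d1 d2 v1 v2 : ℕ} (h1 : v1 < X) (h2 : v2 < X)
    (h : d1 * X + v1 = d2 * X + v2) : d1 = d2 ∧ v1 = v2 := by
  have hd : d1 = d2 := by
    rcases Nat.lt_trichotomy d1 d2 with hlt | he | hgt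
    · exfalso
      have hx : (d1 + 1) * X ≤ d2 * X := Nat.mul_le_mul_right X hlt
      rw [add_mul, one_mul] at hx
      omega
    · exact he
    · exfalso
      have hx : (d2 + 1) * X ≤ d1 * X := Nat.mul_le_mul_right X hgt
      rw [add_mul, one_mul] at hx
      omega
  subst hd
  omega

lemma foldl_digits_inj {B : ℕ} (hB : 0 < B) :
    ∀ l1 l2 : List ℕ, l1.length = l2.length → (∀ d ∈ l1, d < B) → (∀ d ∈ l2, d < B) →
      l1.foldl (fun a d => a * B + d) 0 = l2.foldl (fun a d => a * B + d) 0 → l1 = l2 := by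
  intro l1
  induction l1 with
  | nil =>
    intro l2 hl _ _ _
    exact (List.length_eq_zero_iff.mp hl.symm).symm
  | cons d1 t1 ih =>
    intro l2 hl h1 h2 hv
    cases l2 with
    | nil => simp at hl
    | cons d2 t2 =>
      simp only [List.foldl_cons] at hv
      rw [foldl_digits_shift B t1 (0 * B + d1), foldl_digits_shift B t2 (0 * B + d2)] at hv
      simp only [zero_mul, zero_add] at hv
      have hk : t1.length = t2.length := by simpa using hl
      rw [hk] at hv
      have hv1 : t1.foldl (fun a d => a * B + d) 0 < B ^ t2.length := by
        rw [← hk]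
        exact foldl_digits_lt hB t1 (fun x hx => h1 x (List.mem_cons_of_mem _ hx))
      have hv2 : t2.foldl (fun a d => a * B + d) 0 < B ^ t2.length :=
        foldl_digits_lt hB t2 (fun x hx => h2 x (List.mem_cons_of_mem _ hx))
      obtain ⟨hd, hvv⟩ := mul_add_cancel'' hv1 hv2 hv
      rw [hd, ih t2 hk (fun x hx => h1 x (List.mem_cons_of_mem _ hx))
        (fun x hx => h2 x (List.mem_cons_of_mem _ hx)) hvv]

lemma length_flatMap_digs (p : List (Edge n m)) :
    (p.flatMap fun e => [e.1.val + 1, e.2.val + 1]).length = 2 * p.length := by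
  induction p with
  | nil => simp
  | cons e t ih => simp [List.flatMap_cons, ih]; omega

lemma flatMap_digs_lt (p : List (Edge n m)) :
    ∀ d ∈ p.flatMap fun e => [e.1.val + 1, e.2.val + 1], d < n + m + 2 := by
  intro d hd
  obtain ⟨e, -, hde⟩ := List.mem_flatMap.mp hd
  have h1 := e.1.isLt
  have h2 := e.2.isLt
  simp only [List.mem_cons, List.mem_singleton, List.not_mem_nil, or_false] at hde
  rcases hde with h | h <;> omega

lemma flatMap_pad_inj :
    ∀ (p p' : List (Edge n m)) (a a' : ℕ),
      (p.flatMap fun e => [e.1.val + 1, e.2.val + 1]) ++ List.replicate a 0 =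
        (p'.flatMap fun e => [e.1.val + 1, e.2.val + 1]) ++ List.replicate a' 0 → p = p' := by
  intro p
  induction p with
  | nil =>
    intro p' a a' h
    cases p' with
    | nil => rfl
    | cons e' t' =>
      exfalso
      cases a with
      | zero => simp [List.flatMap_cons] at h
      | succ a =>
        rw [List.replicate_succ] at h
        simp [List.flatMap_cons] at h
  | cons e t ih =>
    intro p' a a' h
    cases p' with
    | nil =>
      exfalso
      cases a' with
      | zero => simp [List.flatMap_cons] at h
      | succ a' =>
        rw [List.replicate_succ] at h
        simp [List.flatMap_cons] at h
    | cons e' t' =>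
      simp only [List.flatMap_cons, List.cons_append, List.append_assoc, List.cons.injEq] at h
      obtain ⟨h1, h2, h3⟩ := h
      have he : e = e' := by
        have : e.1 = e'.1 := Fin.ext (by omega)
        have : e.2 = e'.2 := Fin.ext (by omega)
        exact Prod.ext (Fin.ext (by omega)) this
      rw [he, ih t' a a' (by simpa using h3)]

lemma pathKey_eq (p : List (Edge n m)) :
    pathKey n m p = ((p.flatMap fun (e : Edge n m) => [e.1.val + 1, e.2.val + 1]) ++
      List.replicate (2 * n - 2 * p.length) 0).foldl (fun a d => a * (n + m + 2) + d) 0 := rfl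

lemma pad_digits_lt (p : List (Edge n m)) :
    ∀ d ∈ (p.flatMap fun e => [e.1.val + 1, e.2.val + 1]) ++
      List.replicate (2 * n - 2 * p.length) 0, d < n + m + 2 := by
  intro d hd
  rcases List.mem_append.mp hd with h | h
  · exact flatMap_digs_lt p d h
  · rw [List.eq_of_mem_replicate h]; omega

lemma pad_digits_length {p : List (Edge n m)} (hp : p.length ≤ n) :
    ((p.flatMap fun (e : Edge n m) => [e.1.val + 1, e.2.val + 1]) ++
      List.replicate (2 * n - 2 * p.length) 0).length = 2 * n := by
  rw [List.length_append, length_flatMap_digs, List.length_replicate]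
  omega

lemma pathKey_inj {p p' : List (Edge n m)} (hp : p.length ≤ n) (hp' : p'.length ≤ n)
    (h : pathKey n m p = pathKey n m p') : p = p' := by
  rw [pathKey_eq, pathKey_eq] at h
  have hB : 0 < n + m + 2 := by omega
  have := foldl_digits_inj hB _ _
    (by rw [pad_digits_length hp, pad_digits_length hp']) (pad_digits_lt p) (pad_digits_lt p') h
  exact flatMap_pad_inj p p' _ _ this

lemma pathKey_lt {p : List (Edge n m)} (hp : p.length ≤ n) :
    pathKey n m p < (n + m + 2) ^ (2 * n + 2) := by
  rw [pathKey_eq]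
  have hB : 0 < n + m + 2 := by omega
  have h1 := foldl_digits_lt hB _ (pad_digits_lt p)
  rw [pad_digits_length hp] at h1
  exact lt_of_lt_of_le h1 (Nat.pow_le_pow_right hB (by omega))

lemma dfsCost_inj {p p' : List (Edge n m)} (hp : p.length ≤ n) (hp' : p'.length ≤ n)
    (h : dfsCost n m p = dfsCost n m p') : p = p' := pathKey_inj hp hp' h

lemma bfsCost_inj {p p' : List (Edge n m)} (hp : p.length ≤ n) (hp' : p'.length ≤ n)
    (h : bfsCost n m p = bfsCost n m p') : p = p' := by
  unfold bfsCost at h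
  obtain ⟨-, h2⟩ := mul_add_cancel'' (pathKey_lt hp) (pathKey_lt hp') h
  exact pathKey_inj hp hp' h2

/-! ### Augmenting path facts -/

lemma aug_length_le {b : Fin n → ℕ} {E' μ : Finset (Edge n m)} {j : Fin m}
    {p : List (Edge n m)} (h : IsAugPathFrom b E' μ j p) : p.length ≤ n := by
  have h2 := h.agentsNodup.length_le_card
  simpa using h2

lemma aug_mono {b : Fin n → ℕ} {E1 E2 μ : Finset (Edge n m)} {j : Fin m}
    {p : List (Edge n m)} (hE : E1 ⊆ E2) (h : IsAugPathFrom b E1 μ j p) :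
    IsAugPathFrom b E2 μ j p :=
  { h with mem := fun e he => ⟨hE (h.mem e he).1, (h.mem e he).2⟩ }

lemma deviate_subset {E S : Finset (Edge n m)} {i : Fin n} (hS : S ⊆ agentEdges E i) :
    deviate E i S ⊆ E :=
  Finset.union_subset (Finset.filter_subset _ _) (hS.trans (Finset.filter_subset _ _))

lemma aug_deviate {b : Fin n → ℕ} {E μ S : Finset (Edge n m)} {j : Fin m} {i : Fin n}
    {p : List (Edge n m)} (h : IsAugPathFrom b E μ j p) (hni : ∀ e ∈ p, e.1 ≠ i) :
    IsAugPathFrom b (deviate E i S) μ j p :=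
  { h with
    mem := fun e he =>
      ⟨Finset.mem_union_left _ (Finset.mem_filter.2 ⟨(h.mem e he).1, hni e he⟩),
        (h.mem e he).2⟩ }

lemma deg_applyPath_of_not {p : List (Edge n m)} {i : Fin n} {μ : Finset (Edge n m)}
    (h : ∀ e ∈ p, e.1 ≠ i) : deg (applyPath μ p) i = deg μ i := by
  unfold deg applyPath
  congr 1
  ext e
  simp only [Finset.mem_filter, Finset.mem_union, Finset.mem_sdiff, List.mem_toFinset]
  constructor
  · rintro ⟨he, hei⟩
    refine ⟨?_, hei⟩
    rcases he with ⟨hμ, -⟩ | hp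
    · exact hμ
    · exact absurd hei (h e hp)
  · rintro ⟨hμ, hei⟩
    refine ⟨Or.inl ⟨hμ, fun hm => ?_⟩, hei⟩
    rw [pathMatched] at hm
    obtain ⟨ef, hef, hefe⟩ := List.mem_map.mp hm
    have h1 : ef.1 ∈ p := (List.of_mem_zip hef).1
    have : ef.1.1 = e.1 := by rw [← hefe]
    exact h ef.1 h1 (by rw [this, hei])

lemma deg_applyPath_pos {p : List (Edge n m)} {e : Edge n m} {i : Fin n}
    (μ : Finset (Edge n m)) (he : e ∈ p) (hei : e.1 = i) : 0 < deg (applyPath μ p) i := by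
  unfold deg
  refine Finset.card_pos.2 ⟨e, Finset.mem_filter.2 ⟨?_, hei⟩⟩
  exact Finset.mem_union_right _ (List.mem_toFinset.2 he)

/-! ### The step function -/

noncomputable def augStep (cost : List (Edge n m) → ℕ) (b : Fin n → ℕ)
    (E' μ : Finset (Edge n m)) (j : Fin m) : Finset (Edge n m) :=
  match selectPath cost b E' μ j with
  | some p => applyPath μ p
  | none => μ

lemma runAug_eq (cost : List (Edge n m) → ℕ) (b : Fin n → ℕ) (q : Fin m → ℝ)
    (E' : Finset (Edge n m)) :
    runAug cost b q E' = (sortedTasks m q).foldl (fun μ j => augStep cost b E' μ j) ∅ := rfl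

lemma deg_augStep_pos {cost : List (Edge n m) → ℕ} {b : Fin n → ℕ}
    {E' μ : Finset (Edge n m)} {j : Fin m} {i : Fin n} (h : 0 < deg μ i) :
    0 < deg (augStep cost b E' μ j) i := by
  unfold augStep
  cases hsp : selectPath cost b E' μ j with
  | none => exact h
  | some p =>
    by_cases hc : ∃ e ∈ p, e.1 = i
    · obtain ⟨e, he, hei⟩ := hc
      exact deg_applyPath_pos μ he hei
    · push_neg at hc
      rw [deg_applyPath_of_not hc]
      exact h

lemma deg_foldl_pos {cost : List (Edge n m) → ℕ} {b : Fin n → ℕ} {E' : Finset (Edge n m)}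
    {i : Fin n} :
    ∀ (l : List (Fin m)) (μ : Finset (Edge n m)), 0 < deg μ i →
      0 < deg (l.foldl (fun μ j => augStep cost b E' μ j) μ) i := by
  intro l
  induction l with
  | nil => intro μ h; exact h
  | cons j t ih =>
    intro μ h
    exact ih _ (deg_augStep_pos h)

lemma exists_min_aug (cost : List (Edge n m) → ℕ) {b : Fin n → ℕ}
    {E' μ : Finset (Edge n m)} {j : Fin m} (hex : ∃ p, IsAugPathFrom b E' μ j p) :
    ∃ p, IsAugPathFrom b E' μ j p ∧ ∀ p', IsAugPathFrom b E' μ j p' → cost p ≤ cost p' := by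
  obtain ⟨p0, hp0⟩ := hex
  have hc : ∃ c, ∃ p, IsAugPathFrom b E' μ j p ∧ cost p = c := ⟨cost p0, p0, hp0, rfl⟩
  obtain ⟨p, hp, hpc⟩ := Nat.find_spec hc
  exact ⟨p, hp, fun p' hp' => hpc ▸ Nat.find_min' hc ⟨p', hp', rfl⟩⟩

lemma augStep_deviate {cost : List (Edge n m) → ℕ} {b : Fin n → ℕ}
    {E S μ : Finset (Edge n m)} {i : Fin n} {j : Fin m}
    (hinj : ∀ p p' : List (Edge n m), p.length ≤ n → p'.length ≤ n → cost p = cost p' → p = p')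
    (hS : S ⊆ agentEdges E i) (hafter : deg (augStep cost b E μ j) i = 0) :
    augStep cost b (deviate E i S) μ j = augStep cost b E μ j := by
  by_cases hex : ∃ p0, IsAugPathFrom b E μ j p0
  · have hm := exists_min_aug cost hex
    have hsome : selectPath cost b E μ j = some hm.choose := dif_pos hm
    obtain ⟨hpa, hpm⟩ := hm.choose_spec
    have h2 : deg (applyPath μ hm.choose) i = 0 := by
      rw [augStep, hsome] at hafter
      exact hafter
    have hni : ∀ e ∈ hm.choose, e.1 ≠ i := by
      intro e he hei
      have := deg_applyPath_pos μ he hei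
      omega
    have hpa' : IsAugPathFrom b (deviate E i S) μ j hm.choose := aug_deviate hpa hni
    have hm' : ∃ p', IsAugPathFrom b (deviate E i S) μ j p' ∧
        ∀ p'', IsAugPathFrom b (deviate E i S) μ j p'' → cost p' ≤ cost p'' :=
      ⟨hm.choose, hpa', fun p'' h'' => hpm p'' (aug_mono (deviate_subset hS) h'')⟩
    have hsome' : selectPath cost b (deviate E i S) μ j = some hm'.choose := dif_pos hm'
    obtain ⟨h'a, h'm⟩ := hm'.choose_spec
    have heq : hm'.choose = hm.choose :=
      hinj _ _ (aug_length_le h'a) (aug_length_le hpa)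
        (le_antisymm (h'm hm.choose hpa') (hpm _ (aug_mono (deviate_subset hS) h'a)))
    rw [augStep, augStep, hsome, hsome', heq]
  · have hnone : selectPath cost b E μ j = none := by
      rw [selectPath, dif_neg]
      rintro ⟨p0, hp0, -⟩
      exact hex ⟨p0, hp0⟩
    have hnone' : selectPath cost b (deviate E i S) μ j = none := by
      rw [selectPath, dif_neg]
      rintro ⟨p0, hp0, -⟩
      exact hex ⟨p0, aug_mono (deviate_subset hS) hp0⟩
    rw [augStep, augStep, hnone, hnone']

lemma foldl_deviate {cost : List (Edge n m) → ℕ} {b : Fin n → ℕ}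
    {E S : Finset (Edge n m)} {i : Fin n}
    (hinj : ∀ p p' : List (Edge n m), p.length ≤ n → p'.length ≤ n → cost p = cost p' → p = p')
    (hS : S ⊆ agentEdges E i) :
    ∀ (l : List (Fin m)) (μ : Finset (Edge n m)),
      deg (l.foldl (fun μ j => augStep cost b E μ j) μ) i = 0 →
      l.foldl (fun μ j => augStep cost b (deviate E i S) μ j) μ =
        l.foldl (fun μ j => augStep cost b E μ j) μ := by
  intro l
  induction l with
  | nil => intro μ _; rfl
  | cons j t ih =>
    intro μ hz
    simp only [List.foldl_cons] at hz ⊢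
    have h1 : deg (augStep cost b E μ j) i = 0 := by
      by_contra h
      have := deg_foldl_pos (cost := cost) (b := b) (E' := E) t _ (Nat.pos_of_ne_zero h)
      omega
    rw [augStep_deviate hinj hS h1, ih _ hz]

lemma runAug_deviate {cost : List (Edge n m) → ℕ} {b : Fin n → ℕ} {q : Fin m → ℝ}
    {E S : Finset (Edge n m)} {i : Fin n}
    (hinj : ∀ p p' : List (Edge n m), p.length ≤ n → p'.length ≤ n → cost p = cost p' → p = p')
    (hS : S ⊆ agentEdges E i) (h : deg (runAug cost b q E) i = 0) :
    deg (runAug cost b q (deviate E i S)) i = 0 := by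
  rw [runAug_eq] at h ⊢
  rw [foldl_deviate hinj hS _ _ h]
  exact h

end Aux

/-- Under the maximum-weight b-matching mechanisms induced by the
augmenting-path algorithm with BFS or DFS, an agent assigned no task under truthful
reporting cannot become matched by hiding any subset of its edges: if agent `i` is unmatched
in the output on the true edge set `E`, then for every edge set obtained from `E` by deleting
a subset of `i`'s edges, the output still leaves `i` unmatched. -/
theorem unmatched_agent_cannot_gain (n m : ℕ) (b : Fin n → ℕ) (q : Fin m → ℝ)
    (hq : ∀ j, 0 < q j) (E : Finset (Edge n m)) (i : Fin n) (S : Finset (Edge n m))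
    (hS : S ⊆ agentEdges E i) :
    (deg (MBFS b q E) i = 0 → deg (MBFS b q (deviate E i S)) i = 0) ∧
    (deg (MDFS b q E) i = 0 → deg (MDFS b q (deviate E i S)) i = 0) := by
  constructor
  · exact fun h => runAug_deviate (fun p p' hp hp' hc => bfsCost_inj hp hp' hc) hS h
  · exact fun h => runAug_deviate (fun p p' hp hp' hc => dfsCost_inj hp hp' hc) hS h
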